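/- Let T be twice an odd integer and n a positive integer with 4n ≥ T² and n even. Then T ∈ S(n) if and only if n ≢ 0 (mod 8), where S(n) = {a+b+c+d : a,b,c,d ∈ ℤ, a²+b²+c²+d² = n}. -/

import Mathlib

open Matrix

lemma exists_round (a b : ℤ) (ha : 0 < a) : ∃ k : ℤ, 2 * |b - a * k| ≤ a := by
  have h1 := Int.emod_nonneg b (ne_of_gt ha)
  have h2 := Int.emod_lt_of_pos b ha
  have h3 := Int.mul_ediv_add_emod b a
  rcases le_or_gt (2 * (b % a)) a with h | h
  · refine ⟨b / a, ?_⟩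
    have e : b - a * (b / a) = b % a := by omega
    rw [e, abs_of_nonneg h1]; omega
  · refine ⟨b / a + 1, ?_⟩
    have e : b - a * (b / a + 1) = b % a - a := by
      have : a * (b / a + 1) = a * (b / a) + a := by ring
      omega
    rw [e, abs_of_nonpos (by omega)]; omega

lemma binary_val_pos {a b c : ℤ} (ha : 0 < a) (hD : 0 < a * c - b ^ 2)
    (x y : ℤ) (h : ¬(x = 0 ∧ y = 0)) : 0 < a * x ^ 2 + 2 * b * x * y + c * y ^ 2 := by
  have key : a * (a * x ^ 2 + 2 * b * x * y + c * y ^ 2)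
      = (a * x + b * y) ^ 2 + (a * c - b ^ 2) * y ^ 2 := by ring
  rcases eq_or_ne y 0 with hy | hy
  · subst hy
    have hx : x ≠ 0 := fun hx => h ⟨hx, rfl⟩
    have h1 : 0 < (a * x) ^ 2 := by positivity
    nlinarith [sq_nonneg (a * x + b * 0)]
  · have h1 : 0 < y ^ 2 := by positivity
    nlinarith [sq_nonneg (a * x + b * y), mul_pos hD h1]

/-- Gauss reduction for positive definite binary quadratic forms. -/
lemma binary_reduce : ∀ K : ℕ, ∀ a b c : ℤ, a.toNat ≤ K → 0 < a → 0 < a * c - b ^ 2 →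
    ∃ p q r s : ℤ, p * s - q * r = 1 ∧
      (a * p ^ 2 + 2 * b * p * r + c * r ^ 2 ≤ a * q ^ 2 + 2 * b * q * s + c * s ^ 2) ∧
      2 * |a * p * q + b * (p * s + q * r) + c * r * s| ≤ a * p ^ 2 + 2 * b * p * r + c * r ^ 2 := by
  intro K
  induction K with
  | zero => intro a b c hK ha hD; omega
  | succ K ih =>
    intro a b c hK ha hD
    obtain ⟨k, hk⟩ := exists_round a b ha
    set c' : ℤ := a * k ^ 2 - 2 * b * k + c with hc'
    have hD' : a * c' - (b - a * k) ^ 2 = a * c - b ^ 2 := by rw [hc']; ring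
    by_cases hle : a ≤ c'
    · refine ⟨1, -k, 0, 1, by ring, ?_, ?_⟩
      · have e1 : a * 1 ^ 2 + 2 * b * 1 * 0 + c * 0 ^ 2 = a := by ring
        have e2 : a * (-k) ^ 2 + 2 * b * (-k) * 1 + c * 1 ^ 2 = c' := by rw [hc']; ring
        rw [e1, e2]; exact hle
      · have e1 : a * 1 * (-k) + b * (1 * 1 + -k * 0) + c * 0 * 1 = b - a * k := by ring
        have e2 : a * 1 ^ 2 + 2 * b * 1 * 0 + c * 0 ^ 2 = a := by ring
        rw [e1, e2]; exact hk
    · push_neg at hle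
      have hc'pos : 0 < c' := by
        have := binary_val_pos ha hD (-k) 1 (by simp)
        nlinarith [this]
      have hD'' : 0 < c' * a - (-(b - a * k)) ^ 2 := by nlinarith [hD']
      obtain ⟨p2, q2, r2, s2, hdet2, hle2, habs2⟩ :=
        ih c' (-(b - a * k)) a (by omega) hc'pos hD''
      -- compose with U1 = (p1,q1,r1,s1) = (-k, -1, 1, 0)
      refine ⟨-k * p2 + -1 * r2, -k * q2 + -1 * s2, 1 * p2 + 0 * r2, 1 * q2 + 0 * s2,
        by linear_combination hdet2, ?_, ?_⟩
      · calc a * (-k * p2 + -1 * r2) ^ 2 + 2 * b * (-k * p2 + -1 * r2) * (1 * p2 + 0 * r2)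
              + c * (1 * p2 + 0 * r2) ^ 2
            = c' * p2 ^ 2 + 2 * (-(b - a * k)) * p2 * r2 + a * r2 ^ 2 := by rw [hc']; ring
          _ ≤ c' * q2 ^ 2 + 2 * (-(b - a * k)) * q2 * s2 + a * s2 ^ 2 := hle2
          _ = a * (-k * q2 + -1 * s2) ^ 2 + 2 * b * (-k * q2 + -1 * s2) * (1 * q2 + 0 * s2)
              + c * (1 * q2 + 0 * s2) ^ 2 := by rw [hc']; ring
      · have e1 : a * (-k * p2 + -1 * r2) * (-k * q2 + -1 * s2)
            + b * ((-k * p2 + -1 * r2) * (1 * q2 + 0 * s2) + (-k * q2 + -1 * s2) * (1 * p2 + 0 * r2))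
            + c * (1 * p2 + 0 * r2) * (1 * q2 + 0 * s2)
            = c' * p2 * q2 + (-(b - a * k)) * (p2 * s2 + q2 * r2) + a * r2 * s2 := by rw [hc']; ring
        have e2 : a * (-k * p2 + -1 * r2) ^ 2 + 2 * b * (-k * p2 + -1 * r2) * (1 * p2 + 0 * r2)
            + c * (1 * p2 + 0 * r2) ^ 2
            = c' * p2 ^ 2 + 2 * (-(b - a * k)) * p2 * r2 + a * r2 ^ 2 := by rw [hc']; ring
        rw [e1, e2]; exact habs2

lemma binary_identity (a b c : ℤ) (ha : 0 < a) (hD : a * c - b ^ 2 = 1) :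
    ∃ p q r s : ℤ, p * s - q * r = 1 ∧
      a * p ^ 2 + 2 * b * p * r + c * r ^ 2 = 1 ∧
      a * p * q + b * (p * s + q * r) + c * r * s = 0 ∧
      a * q ^ 2 + 2 * b * q * s + c * s ^ 2 = 1 := by
  obtain ⟨p, q, r, s, hdet, hle, habs⟩ :=
    binary_reduce (a.toNat) a b c le_rfl ha (by omega)
  refine ⟨p, q, r, s, hdet, ?_⟩
  set A : ℤ := a * p ^ 2 + 2 * b * p * r + c * r ^ 2 with hA
  set B : ℤ := a * p * q + b * (p * s + q * r) + c * r * s with hB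
  set C : ℤ := a * q ^ 2 + 2 * b * q * s + c * s ^ 2 with hC
  have hdetn : A * C - B ^ 2 = 1 := by
    have e : A * C - B ^ 2 = (p * s - q * r) ^ 2 * (a * c - b ^ 2) := by
      rw [hA, hB, hC]; ring
    rw [e, hdet, hD]; ring
  have hApos : 0 < A := by
    have hpr : ¬(p = 0 ∧ r = 0) := by
      rintro ⟨rfl, rfl⟩; simp at hdet
    exact binary_val_pos ha (by omega) p r hpr
  have hB2 : 4 * B ^ 2 ≤ A ^ 2 := by
    have := sq_abs B
    nlinarith [abs_nonneg B]
  have hA1 : A = 1 := by nlinarith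
  have hB0 : B = 0 := by
    rw [hA1] at habs
    have h0 : |B| = 0 := by have := abs_nonneg B; omega
    exact abs_eq_zero.mp h0
  refine ⟨hA1, hB0, ?_⟩
  rw [hA1, hB0] at hdetn; omega

lemma binary_hermite (a b c : ℤ) (ha : 0 < a) (hD : 0 < a * c - b ^ 2) :
    ∃ x y u v : ℤ, x * v - y * u = 1 ∧
      0 < a * x ^ 2 + 2 * b * x * y + c * y ^ 2 ∧
      3 * (a * x ^ 2 + 2 * b * x * y + c * y ^ 2) ^ 2 ≤ 4 * (a * c - b ^ 2) := by
  obtain ⟨p, q, r, s, hdet, hle, habs⟩ :=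
    binary_reduce (a.toNat) a b c le_rfl ha hD
  refine ⟨p, r, q, s, by linear_combination hdet, ?_, ?_⟩
  · have hpr : ¬(p = 0 ∧ r = 0) := by
      rintro ⟨rfl, rfl⟩; simp at hdet
    exact binary_val_pos ha hD p r hpr
  · set A : ℤ := a * p ^ 2 + 2 * b * p * r + c * r ^ 2 with hA
    set B : ℤ := a * p * q + b * (p * s + q * r) + c * r * s with hB
    set C : ℤ := a * q ^ 2 + 2 * b * q * s + c * s ^ 2 with hC
    have hdetn : A * C - B ^ 2 = a * c - b ^ 2 := by
      have e : A * C - B ^ 2 = (p * s - q * r) ^ 2 * (a * c - b ^ 2) := by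
        rw [hA, hB, hC]; ring
      rw [e, hdet]; ring
    have hApos : 0 < A := by
      have hpr : ¬(p = 0 ∧ r = 0) := by
        rintro ⟨rfl, rfl⟩; simp at hdet
      exact binary_val_pos ha hD p r hpr
    have hB2 : 4 * B ^ 2 ≤ A ^ 2 := by
      have := sq_abs B
      nlinarith [abs_nonneg B]
    nlinarith

open Matrix

abbrev M3 := Matrix (Fin 3) (Fin 3) ℤ

lemma congr_symm3 (G U : M3) (hG : Gᵀ = G) : (Uᵀ * G * U)ᵀ = Uᵀ * G * U := by
  rw [Matrix.transpose_mul, Matrix.transpose_mul, Matrix.transpose_transpose, hG,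
    Matrix.mul_assoc]

lemma congr_det3 (G U : M3) : (Uᵀ * G * U).det = U.det ^ 2 * G.det := by
  rw [Matrix.det_mul, Matrix.det_mul, Matrix.det_transpose]; ring

lemma mulVec_ne_zero3 (U : M3) (hU : IsUnit U.det) (v : Fin 3 → ℤ) (hv : v ≠ 0) :
    U *ᵥ v ≠ 0 := by
  intro h0
  apply hv
  have h1 : (U.adjugate * U) *ᵥ v = U.adjugate *ᵥ (U *ᵥ v) := by
    rw [Matrix.mulVec_mulVec]
  rw [h0, Matrix.mulVec_zero, Matrix.adjugate_mul] at h1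
  have h2 : U.det • v = 0 := by
    have : (U.det • (1 : M3)) *ᵥ v = U.det • ((1 : M3) *ᵥ v) := by
      rw [Matrix.smul_mulVec]
    rwa [this, Matrix.one_mulVec] at h1
  have hd : U.det ≠ 0 := hU.ne_zero
  funext i
  have := congrFun h2 i
  simp only [Pi.smul_apply, smul_eq_mul, Pi.zero_apply] at this ⊢
  exact (mul_eq_zero.mp this).resolve_left hd

lemma congr_pos3 (G U : M3) (hU : IsUnit U.det)
    (hpos : ∀ v : Fin 3 → ℤ, v ≠ 0 → 0 < v ⬝ᵥ (G *ᵥ v)) :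
    ∀ v : Fin 3 → ℤ, v ≠ 0 → 0 < v ⬝ᵥ ((Uᵀ * G * U) *ᵥ v) := by
  intro v hv
  have e : v ⬝ᵥ ((Uᵀ * G * U) *ᵥ v) = (U *ᵥ v) ⬝ᵥ (G *ᵥ (U *ᵥ v)) := by
    rw [← Matrix.mulVec_mulVec, ← Matrix.mulVec_mulVec, Matrix.dotProduct_mulVec,
      Matrix.vecMul_transpose]
  rw [e]
  exact hpos _ (mulVec_ne_zero3 U hU v hv)

lemma quad3 (G : M3) (x y z : ℤ) :
    (![x, y, z]) ⬝ᵥ (G *ᵥ ![x, y, z]) =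
      G 0 0 * x * x + G 0 1 * x * y + G 0 2 * x * z +
      G 1 0 * x * y + G 1 1 * y * y + G 1 2 * y * z +
      G 2 0 * x * z + G 2 1 * y * z + G 2 2 * z * z := by
  simp [dotProduct, Matrix.mulVec, Fin.sum_univ_three]
  ring

lemma vec3_ne_zero (x y z : ℤ) (h : ¬(x = 0 ∧ y = 0 ∧ z = 0)) : (![x, y, z] : Fin 3 → ℤ) ≠ 0 := by
  intro h0
  exact h ⟨congrFun h0 0, congrFun h0 1, congrFun h0 2⟩

lemma congr_entry (G U : M3) (i j : Fin 3) :
    (Uᵀ * G * U) i j =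
      U 0 i * G 0 0 * U 0 j + U 0 i * G 0 1 * U 1 j + U 0 i * G 0 2 * U 2 j +
      U 1 i * G 1 0 * U 0 j + U 1 i * G 1 1 * U 1 j + U 1 i * G 1 2 * U 2 j +
      U 2 i * G 2 0 * U 0 j + U 2 i * G 2 1 * U 1 j + U 2 i * G 2 2 * U 2 j := by
  simp [Matrix.mul_apply, Fin.sum_univ_three, Matrix.transpose_apply]
  ring

example (G : M3) (p q r s : ℤ) :
    (!![(1:ℤ), 0, 0; 0, p, q; 0, r, s])ᵀ * G * !![(1:ℤ), 0, 0; 0, p, q; 0, r, s] =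
      !![G 0 0, G 0 1 * p + G 0 2 * r, G 0 1 * q + G 0 2 * s;
         G 1 0 * p + G 2 0 * r, G 1 1 * p ^ 2 + (G 1 2 + G 2 1) * p * r + G 2 2 * r ^ 2,
           G 1 1 * p * q + G 1 2 * p * s + G 2 1 * q * r + G 2 2 * r * s;
         G 1 0 * q + G 2 0 * s, G 1 1 * p * q + G 2 1 * p * s + G 1 2 * q * r + G 2 2 * r * s,
           G 1 1 * q ^ 2 + (G 1 2 + G 2 1) * q * s + G 2 2 * s ^ 2] := by
  ext i j
  fin_cases i <;> fin_cases j <;> rw [congr_entry] <;>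
    simp [Matrix.vecHead, Matrix.vecTail] <;> ring

lemma descent_bound (a a2 w V : ℤ) (ha : 2 ≤ a) (hV : 1 ≤ V) (h1 : a * a2 = w ^ 2 + V)
    (hw : 2 * |w| ≤ a) (h3 : 3 * V ^ 2 ≤ 4 * a) : a2 < a := by
  have hw2 : 4 * w ^ 2 ≤ a ^ 2 := by nlinarith [abs_nonneg w, sq_abs w]
  have hV4 : 3 * V ≤ 4 * a := by nlinarith
  have h12 : 12 * (a * a2) ≤ 3 * a ^ 2 + 16 * a := by nlinarith
  nlinarith

lemma ternary_identity : ∀ K : ℕ, ∀ G : M3, Gᵀ = G → G.det = 1 →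
    (∀ v : Fin 3 → ℤ, v ≠ 0 → 0 < v ⬝ᵥ (G *ᵥ v)) → (G 0 0).toNat ≤ K →
    ∃ U : M3, IsUnit U.det ∧ Uᵀ * G * U = 1 := by
  intro K
  induction K with
  | zero =>
    intro G hG hdet hpos hK
    have h0 : 0 < G 0 0 := by
      have := hpos ![1, 0, 0] (vec3_ne_zero 1 0 0 (by norm_num))
      rw [quad3] at this
      ring_nf at this
      linarith
    omega
  | succ K ih =>
    intro G hG hdet hpos hK
    have h10 : G 1 0 = G 0 1 := by have h := congrFun (congrFun hG 1) 0; simpa using h.symm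
    have h20 : G 2 0 = G 0 2 := by have h := congrFun (congrFun hG 2) 0; simpa using h.symm
    have h21 : G 2 1 = G 1 2 := by have h := congrFun (congrFun hG 2) 1; simpa using h.symm
    have h0 : 0 < G 0 0 := by
      have := hpos ![1, 0, 0] (vec3_ne_zero 1 0 0 (by norm_num))
      rw [quad3] at this
      ring_nf at this
      linarith
    by_cases ha1 : G 0 0 = 1
    · -- corner is 1: split off and use binary theory
      set U1 : M3 := !![1, -G 0 1, -G 0 2; 0, 1, 0; 0, 0, 1] with hU1def
      have hU1det : U1.det = 1 := by
        rw [hU1def, Matrix.det_fin_three]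
        simp [Matrix.vecHead, Matrix.vecTail]
      have hU1 : U1ᵀ * G * U1 = !![1, 0, 0;
          0, G 1 1 - G 0 1 ^ 2, G 1 2 - G 0 1 * G 0 2;
          0, G 1 2 - G 0 1 * G 0 2, G 2 2 - G 0 2 ^ 2] := by
        ext i j
        fin_cases i <;> fin_cases j <;> rw [congr_entry] <;>
          simp [hU1def, Matrix.vecHead, Matrix.vecTail] <;>
          (try rw [h10]) <;> (try rw [h20]) <;> (try rw [h21]) <;> (try rw [ha1]) <;> ring
      have hG1det : (G 1 1 - G 0 1 ^ 2) * (G 2 2 - G 0 2 ^ 2)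
          - (G 1 2 - G 0 1 * G 0 2) ^ 2 = 1 := by
        have hd := congr_det3 G U1
        rw [hU1, hU1det, hdet, Matrix.det_fin_three] at hd
        simp [Matrix.vecHead, Matrix.vecTail] at hd
        linear_combination hd
      have hG1pos : 0 < G 1 1 - G 0 1 ^ 2 := by
        have hp := congr_pos3 G U1 (by rw [hU1det]; exact isUnit_one) hpos
            ![0, 1, 0] (vec3_ne_zero 0 1 0 (by norm_num))
        rw [hU1, quad3] at hp
        simp [Matrix.vecHead, Matrix.vecTail] at hp
        linarith
      obtain ⟨p, q, r, s, hpqrs, B1, B2, B3⟩ :=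
        binary_identity _ _ _ hG1pos hG1det
      set U2 : M3 := !![1, 0, 0; 0, p, q; 0, r, s] with hU2def
      have hU2det : U2.det = 1 := by
        rw [hU2def, Matrix.det_fin_three]
        simp [Matrix.vecHead, Matrix.vecTail]
        linear_combination hpqrs
      refine ⟨U1 * U2, ?_, ?_⟩
      · rw [Matrix.det_mul, hU1det, hU2det]; exact isUnit_one
      · have e : (U1 * U2)ᵀ * G * (U1 * U2) = U2ᵀ * (U1ᵀ * G * U1) * U2 := by
          simp only [Matrix.transpose_mul, Matrix.mul_assoc]
        rw [e, hU1]
        ext i j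
        fin_cases i <;> fin_cases j <;> rw [congr_entry] <;>
          simp [hU2def, Matrix.vecHead, Matrix.vecTail, Matrix.one_apply] <;>
          first
            | ring1
            | linear_combination B1
            | linear_combination B2
            | linear_combination B3
            | linear_combination -B2
    · -- descent case
      have ha2' : 2 ≤ G 0 0 := by omega
      have hα : 0 < G 0 0 * G 1 1 - G 0 1 ^ 2 := by
        have hv := hpos ![-(G 0 1), G 0 0, 0]
            (vec3_ne_zero _ _ _ (by intro h; exact (by omega : G 0 0 ≠ 0) h.2.1))
        rw [quad3, h10, h20, h21] at hv
        nlinarith [hv]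
      have hdet3 := Matrix.det_fin_three G
      rw [hdet, h10, h20, h21] at hdet3
      have hdetN : (G 0 0 * G 1 1 - G 0 1 ^ 2) * (G 0 0 * G 2 2 - G 0 2 ^ 2)
          - (G 0 0 * G 1 2 - G 0 1 * G 0 2) ^ 2 = G 0 0 := by
        linear_combination G 0 0 * hdet3.symm
      obtain ⟨x, y, u, v, hcop, hVpos, hVb⟩ :=
        binary_hermite (G 0 0 * G 1 1 - G 0 1 ^ 2) (G 0 0 * G 1 2 - G 0 1 * G 0 2)
          (G 0 0 * G 2 2 - G 0 2 ^ 2) hα (by rw [hdetN]; omega)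
      rw [hdetN] at hVb
      obtain ⟨k, hk⟩ := exists_round (G 0 0) (G 0 1 * x + G 0 2 * y) h0
      have hxy : ¬((-k : ℤ) = 0 ∧ x = 0 ∧ y = 0) := by
        rintro ⟨-, rfl, rfl⟩
        simp at hcop
      set a2 : ℤ := (![(-k), x, y]) ⬝ᵥ (G *ᵥ ![(-k), x, y]) with ha2def
      have hval : a2 = G 0 0 * k ^ 2 + G 1 1 * x ^ 2 + G 2 2 * y ^ 2
          - 2 * G 0 1 * k * x - 2 * G 0 2 * k * y + 2 * G 1 2 * x * y := by
        rw [ha2def, quad3, h10, h20, h21]; ring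
      have ha2p : 0 < a2 := by
        rw [ha2def]; exact hpos _ (vec3_ne_zero _ _ _ hxy)
      have hkey : G 0 0 * a2 = (G 0 1 * x + G 0 2 * y - G 0 0 * k) ^ 2 +
          ((G 0 0 * G 1 1 - G 0 1 ^ 2) * x ^ 2 +
           2 * (G 0 0 * G 1 2 - G 0 1 * G 0 2) * x * y +
           (G 0 0 * G 2 2 - G 0 2 ^ 2) * y ^ 2) := by
        linear_combination G 0 0 * hval
      have ha2lt : a2 < G 0 0 :=
        descent_bound (G 0 0) a2 (G 0 1 * x + G 0 2 * y - G 0 0 * k) _ ha2' (by omega) hkey hk hVb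
      set U3 : M3 := !![(-k), 1, 0; x, 0, u; y, 0, v] with hU3def
      have hU3det : U3.det = -1 := by
        rw [hU3def, Matrix.det_fin_three]
        simp [Matrix.vecHead, Matrix.vecTail]
        linear_combination -hcop
      have hU3unit : IsUnit U3.det := by rw [hU3det]; exact isUnit_one.neg
      have hG2symm := congr_symm3 G U3 hG
      have hG2det : (U3ᵀ * G * U3).det = 1 := by
        rw [congr_det3, hU3det, hdet]; ring
      have hG2pos := congr_pos3 G U3 hU3unit hpos
      have hG2a : (U3ᵀ * G * U3) 0 0 = a2 := by
        rw [congr_entry]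
        simp [hU3def, Matrix.vecHead, Matrix.vecTail]
        rw [h10, h20, h21]
        linear_combination -hval
      obtain ⟨U4, hU4unit, hU4⟩ := ih (U3ᵀ * G * U3) hG2symm hG2det hG2pos (by omega)
      refine ⟨U3 * U4, ?_, ?_⟩
      · rw [Matrix.det_mul]; exact hU3unit.mul hU4unit
      · have e : (U3 * U4)ᵀ * G * (U3 * U4) = U4ᵀ * (U3ᵀ * G * U3) * U4 := by
          simp only [Matrix.transpose_mul, Matrix.mul_assoc]
        rw [e, hU4]

/-- Dirichlet: choose a prime p ≡ 1 mod 8 and ≡ u mod n. -/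
lemma exists_good_prime (n u : ℕ) (h1 : 1 ≤ n) (hodd : n % 2 = 1) (hu : Nat.Coprime u n) :
    ∃ p : ℕ, p.Prime ∧ 8 * n < p ∧ p % 8 = 1 ∧ p ≡ u [MOD n] := by
  haveI : NeZero (8 * n) := ⟨by omega⟩
  have h2co : Nat.Coprime 2 n := by
    have h := Nat.gcd_rec 2 n
    rw [hodd] at h
    exact h.trans (by norm_num)
  have h8co : Nat.Coprime 8 n := by
    have h8 : (8 : ℕ) = 2 ^ 3 := by norm_num
    rw [h8]
    exact Nat.Coprime.pow_left 3 h2co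
  obtain ⟨k, hk8, hkn⟩ := Nat.chineseRemainder h8co 1 u
  have hco8 : Nat.Coprime k 8 := by
    have hr : Nat.gcd 8 k = Nat.gcd (k % 8) 8 := Nat.gcd_rec 8 k
    have hk8' : k % 8 = 1 := by
      have := hk8
      unfold Nat.ModEq at this
      omega
    rw [hk8'] at hr
    have : Nat.gcd 8 k = 1 := hr.trans (by norm_num)
    exact Nat.coprime_comm.mp this
  have hcon : Nat.Coprime k n := by
    have h' : Nat.gcd n k = Nat.gcd (k % n) n := Nat.gcd_rec n k
    have hkn' : k % n = u % n := hkn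
    rw [hkn'] at h'
    have h'' : Nat.gcd (u % n) n = Nat.gcd n u := (Nat.gcd_rec n u).symm
    rw [h''] at h'
    have hnu : Nat.gcd n u = 1 := Nat.coprime_comm.mp hu
    rw [hnu] at h'
    exact Nat.coprime_comm.mp h'
  have hunit : IsUnit (k : ZMod (8 * n)) := by
    rw [ZMod.isUnit_iff_coprime]
    exact Nat.Coprime.mul_right hco8 hcon
  obtain ⟨p, hgt, hp, hmod⟩ := Nat.forall_exists_prime_gt_and_eq_mod hunit (8 * n)
  refine ⟨p, hp, hgt, ?_, ?_⟩
  · have : p ≡ k [MOD 8 * n] := (ZMod.natCast_eq_natCast_iff _ _ _).mp hmod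
    have h8 : p ≡ k [MOD 8] := this.of_mul_right n
    have := hk8
    unfold Nat.ModEq at *
    omega
  · have : p ≡ k [MOD 8 * n] := (ZMod.natCast_eq_natCast_iff _ _ _).mp hmod
    have hn : p ≡ k [MOD n] := this.of_mul_left 8
    exact hn.trans hkn

/-- assemble a positive definite det-1 ternary form with corner n -/
lemma build_form (n D h f0 b c : ℤ) (hn : 0 < n) (hD : 0 < D)
    (hb : n * b = h ^ 2 + D) (hc : D * c = 1 + n * f0 ^ 2) :
    ∃ G : M3, Gᵀ = G ∧ G.det = 1 ∧
      (∀ v : Fin 3 → ℤ, v ≠ 0 → 0 < v ⬝ᵥ (G *ᵥ v)) ∧ G 0 0 = n := by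
  refine ⟨!![n, h, 0; h, b, f0; 0, f0, c], ?_, ?_, ?_, by simp⟩
  · ext i j
    fin_cases i <;> fin_cases j <;> simp [Matrix.vecHead, Matrix.vecTail]
  · rw [Matrix.det_fin_three]
    simp [Matrix.vecHead, Matrix.vecTail]
    linear_combination c * hb + hc
  · intro v hv
    have hveq : v = ![v 0, v 1, v 2] := by
      funext i; fin_cases i <;> rfl
    rw [hveq]
    have hQ := quad3 !![n, h, 0; h, b, f0; 0, f0, c] (v 0) (v 1) (v 2)
    rw [hQ]
    simp [Matrix.vecHead, Matrix.vecTail]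
    have key : D * n * (n * (v 0 * v 0) + h * (v 0 * v 1) + (h * (v 0 * v 1) + b * (v 1 * v 1) +
        f0 * (v 1 * v 2)) + (f0 * (v 1 * v 2) + c * (v 2 * v 2)))
        = D * (n * v 0 + h * v 1) ^ 2 + (D * v 1 + n * f0 * v 2) ^ 2 + n * v 2 ^ 2 := by
      linear_combination (D * v 1 ^ 2) * hb + (n * v 2 ^ 2) * hc
    have h0 : ¬(v 0 = 0 ∧ v 1 = 0 ∧ v 2 = 0) := by
      intro hz
      apply hv
      funext i; fin_cases i <;> simp [hz.1, hz.2.1, hz.2.2]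
    have hDn : 0 < D * n := mul_pos hD hn
    rcases eq_or_ne (v 2) 0 with h2 | h2
    · rcases eq_or_ne (v 1) 0 with hh1 | hh1
      · have hh0 : v 0 ≠ 0 := by tauto
        have : 0 < (n * v 0 + h * v 1) ^ 2 := by
          rw [hh1]
          simp only [mul_zero, add_zero]
          have hz : n * v 0 ≠ 0 := mul_ne_zero (by omega) hh0
          positivity
        nlinarith [sq_nonneg (D * v 1 + n * f0 * v 2), sq_nonneg (v 2), key]
      · have : 0 < (D * v 1 + n * f0 * v 2) ^ 2 := by
          rw [h2]
          simp only [mul_zero, add_zero]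
          have hz : D * v 1 ≠ 0 := mul_ne_zero (by omega) hh1
          positivity
        nlinarith [sq_nonneg (n * v 0 + h * v 1), sq_nonneg (v 2), key]
    · have : 0 < v 2 ^ 2 := by positivity
      nlinarith [sq_nonneg (n * v 0 + h * v 1), sq_nonneg (D * v 1 + n * f0 * v 2), key]

lemma rep_corner (G : M3) (hsym : Gᵀ = G) (hdet : G.det = 1)
    (hpos : ∀ v : Fin 3 → ℤ, v ≠ 0 → 0 < v ⬝ᵥ (G *ᵥ v)) :
    ∃ x y z : ℤ, x ^ 2 + y ^ 2 + z ^ 2 = G 0 0 := by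
  obtain ⟨U, hUu, hU⟩ := ternary_identity (G 0 0).toNat G hsym hdet hpos le_rfl
  have hdet2 : U.det * U.det = 1 := by
    rcases Int.isUnit_iff.mp hUu with h | h <;> rw [h] <;> norm_num
  set W : M3 := U.det • U.adjugate with hW
  have hUW : U * W = 1 := by
    rw [hW, Matrix.mul_smul, Matrix.mul_adjugate, smul_smul, hdet2, one_smul]
  have hWU : W * U = 1 := by
    rw [hW, Matrix.smul_mul, Matrix.adjugate_mul, smul_smul, hdet2, one_smul]
  have hA : G = Wᵀ * W := by
    have e1 : G = (U * W)ᵀ * G * (U * W) := by rw [hUW]; simp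
    calc G = (U * W)ᵀ * G * (U * W) := e1
      _ = Wᵀ * (Uᵀ * G * U) * W := by
          simp only [Matrix.transpose_mul, Matrix.mul_assoc]
      _ = Wᵀ * W := by rw [hU]; simp [Matrix.mul_assoc]
  refine ⟨W 0 0, W 1 0, W 2 0, ?_⟩
  have := congrFun (congrFun hA 0) 0
  rw [this]
  simp [Matrix.mul_apply, Fin.sum_univ_three, Matrix.transpose_apply]
  ring

lemma jacobi_computation (n p : ℕ) (hnodd : n % 2 = 1) (hp8 : p % 8 = 1) (hpodd : Odd p)
    (hcase : ((p : ℤ) % n = (-1) % n ∧ n % 4 = 1) ∨ ((p : ℤ) % n = (-2) % n ∧ n % 8 = 3)) :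
    jacobiSym (-(n : ℤ)) p = 1 := by
  have hp4 : p % 4 = 1 := by omega
  have e : (-(n : ℤ)) = -1 * n := by ring
  rw [e, jacobiSym.mul_left, jacobiSym.at_neg_one hpodd, ZMod.χ₄_nat_one_mod_four hp4, one_mul]
  have hrec : jacobiSym (n : ℤ) p = jacobiSym (p : ℤ) n :=
    (jacobiSym.quadratic_reciprocity_one_mod_four hp4 (Nat.odd_iff.mpr hnodd)).symm
  rw [hrec]
  rcases hcase with ⟨hmod, h4⟩ | ⟨hmod, h83⟩
  · rw [jacobiSym.mod_left' hmod, jacobiSym.at_neg_one (Nat.odd_iff.mpr hnodd),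
      ZMod.χ₄_nat_one_mod_four h4]
  · rw [jacobiSym.mod_left' hmod, jacobiSym.at_neg_two (Nat.odd_iff.mpr hnodd),
      ZMod.χ₈'_nat_eq_if_mod_eight]
    have h2 : n % 2 ≠ 0 := by omega
    simp [h83, h2]

lemma assemble (n : ℕ) (h1 : 1 ≤ n) (D h f0 b c : ℤ) (hD : 0 < D)
    (hb : (n : ℤ) * b = h ^ 2 + D) (hc : D * c = 1 + n * f0 ^ 2) :
    ∃ x y z : ℤ, x ^ 2 + y ^ 2 + z ^ 2 = n := by
  obtain ⟨G, hsym, hdet, hpos, hcorn⟩ :=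
    build_form n D h f0 b c (by exact_mod_cast h1) hD hb hc
  obtain ⟨x, y, z, hx⟩ := rep_corner G hsym hdet hpos
  exact ⟨x, y, z, by rw [hx, hcorn]⟩

lemma get_f (n p : ℕ) (hp : p.Prime) (hlt : n < p) (h1 : 1 ≤ n)
    (hJ : jacobiSym (-(n : ℤ)) p = 1) :
    ∃ f0 : ℤ, (p : ℤ) ∣ (n * f0 ^ 2 + 1) := by
  haveI : Fact p.Prime := ⟨hp⟩
  have hpn : ¬ (p : ℤ) ∣ (n : ℤ) := by
    rw [Int.natCast_dvd_natCast]
    intro hdvd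
    exact absurd (Nat.le_of_dvd (by omega) hdvd) (by omega)
  have hn0 : ((n : ℕ) : ZMod p) ≠ 0 := by
    intro h0
    apply hpn
    rw [← ZMod.intCast_zmod_eq_zero_iff_dvd]
    push_cast
    exact_mod_cast h0
  have hminus : ((-(n : ℤ) : ℤ) : ZMod p) ≠ 0 := by
    push_cast
    simpa using hn0
  have hsq : IsSquare ((-(n : ℤ) : ℤ) : ZMod p) := by
    rw [← legendreSym.eq_one_iff p hminus, jacobiSym.legendreSym.to_jacobiSym]
    exact hJ
  obtain ⟨r, hr⟩ := hsq
  have hr' : r * r = -((n : ℕ) : ZMod p) := by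
    push_cast at hr
    linear_combination -hr
  set fz : ZMod p := r * ((n : ℕ) : ZMod p)⁻¹ with hfz
  have hval : ((n : ℕ) : ZMod p) * fz ^ 2 = -1 := by
    rw [hfz]
    field_simp
    linear_combination hr'
  refine ⟨(fz.val : ℤ), ?_⟩
  rw [← ZMod.intCast_zmod_eq_zero_iff_dvd]
  push_cast
  rw [ZMod.natCast_val, ZMod.cast_id]
  rw [hval]
  ring

lemma three_squares_core (n : ℕ) (h1 : 1 ≤ n) (hodd : n % 2 = 1) (h8 : n % 8 ≠ 7) :
    ∃ x y z : ℤ, x ^ 2 + y ^ 2 + z ^ 2 = n := by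
  have hn8 : n % 4 = 1 ∨ n % 8 = 3 := by omega
  rcases hn8 with hcase | hcase
  · -- u = n - 1
    have hucop : Nat.Coprime (n - 1) n := by
      have hd1 := Nat.gcd_dvd_left (n - 1) n
      have hd2 := Nat.gcd_dvd_right (n - 1) n
      have hd := Nat.dvd_sub hd2 hd1
      rw [show n - (n - 1) = 1 from by omega] at hd
      exact Nat.dvd_one.mp hd
    obtain ⟨p, hp, hplt, hp8, hpmod⟩ := exists_good_prime n (n - 1) h1 hodd hucop
    have hpodd : Odd p := Nat.odd_iff.mpr (by omega)
    have hmodZ : (p : ℤ) % n = (-1) % n := by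
      have hmm : p % n = (n - 1) % n := hpmod
      have h' : (p : ℤ) % n = ((n - 1 : ℕ) : ℤ) % n := by
        rw [← Int.natCast_mod, ← Int.natCast_mod, hmm]
      have e1 : (((n : ℤ) - 1)) % n = (-1) % n := by
        have e : (n : ℤ) - 1 = -1 + n * 1 := by ring
        rw [e, Int.add_mul_emod_self_left]
      have e2 : ((n - 1 : ℕ) : ℤ) = (n : ℤ) - 1 := by
        push_cast [Nat.cast_sub h1]
        ring
      rw [h', e2, e1]
    have hJ := jacobi_computation n p hodd hp8 hpodd (Or.inl ⟨hmodZ, hcase⟩)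
    obtain ⟨f0, hf0⟩ := get_f n p hp (by omega) h1 hJ
    -- b : n ∣ p + 1
    have hb' : n ∣ p + 1 := by
      have h2 : p + 1 ≡ (n - 1) + 1 [MOD n] := hpmod.add_right 1
      rw [show n - 1 + 1 = n from by omega] at h2
      have h3 : p + 1 ≡ 0 [MOD n] := h2.trans (Nat.modEq_zero_iff_dvd.mpr dvd_rfl)
      exact Nat.modEq_zero_iff_dvd.mp h3
    obtain ⟨b0, hb0⟩ := hb'
    obtain ⟨c0, hc0⟩ := hf0
    refine assemble n h1 (p : ℤ) 1 f0 (b0 : ℤ) c0 (by exact_mod_cast hp.pos) ?_ ?_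
    · have : ((p + 1 : ℕ) : ℤ) = ((n * b0 : ℕ) : ℤ) := congrArg Nat.cast hb0
      push_cast at this
      linarith
    · linarith [hc0]
  · -- u = n - 2
    have h3n : 3 ≤ n := by omega
    have hucop : Nat.Coprime (n - 2) n := by
      have hd1 := Nat.gcd_dvd_left (n - 2) n
      have hd2 := Nat.gcd_dvd_right (n - 2) n
      have hd := Nat.dvd_sub hd2 hd1
      rw [show n - (n - 2) = 2 from by omega] at hd
      rcases (Nat.prime_two.eq_one_or_self_of_dvd _ hd) with h | h
      · exact h
      · exfalso
        have : (2 : ℕ) ∣ n := h ▸ hd2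
        omega
    obtain ⟨p, hp, hplt, hp8, hpmod⟩ := exists_good_prime n (n - 2) h1 hodd hucop
    have hpodd : Odd p := Nat.odd_iff.mpr (by omega)
    have hmodZ : (p : ℤ) % n = (-2) % n := by
      have hmm : p % n = (n - 2) % n := hpmod
      have h' : (p : ℤ) % n = ((n - 2 : ℕ) : ℤ) % n := by
        rw [← Int.natCast_mod, ← Int.natCast_mod, hmm]
      have e1 : (((n : ℤ) - 2)) % n = (-2) % n := by
        have e : (n : ℤ) - 2 = -2 + n * 1 := by ring
        rw [e, Int.add_mul_emod_self_left]
      have e2 : ((n - 2 : ℕ) : ℤ) = (n : ℤ) - 2 := by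
        push_cast [Nat.cast_sub (by omega : 2 ≤ n)]
        ring
      rw [h', e2, e1]
    have hJ := jacobi_computation n p hodd hp8 hpodd (Or.inr ⟨hmodZ, hcase⟩)
    obtain ⟨f0, hf0⟩ := get_f n p hp (by omega) h1 hJ
    have hb' : n ∣ p + 2 := by
      have h2 : p + 2 ≡ (n - 2) + 2 [MOD n] := hpmod.add_right 2
      rw [show n - 2 + 2 = n from by omega] at h2
      have h3 : p + 2 ≡ 0 [MOD n] := h2.trans (Nat.modEq_zero_iff_dvd.mpr dvd_rfl)
      exact Nat.modEq_zero_iff_dvd.mp h3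
    obtain ⟨b0, hb0⟩ := hb'
    -- make f0 odd
    have hpoddZ : Odd (p : ℤ) := Int.odd_coe_nat p |>.mpr hpodd
    have hnoddZ : Odd (n : ℤ) := Int.odd_coe_nat n |>.mpr (Nat.odd_iff.mpr hodd)
    obtain ⟨F, hFodd, hFdvd⟩ : ∃ F : ℤ, Odd F ∧ (p : ℤ) ∣ (n * F ^ 2 + 1) := by
      rcases Int.even_or_odd f0 with he | ho
      · refine ⟨f0 + p, he.add_odd hpoddZ, ?_⟩
        have e : (n : ℤ) * (f0 + p) ^ 2 + 1 = (n * f0 ^ 2 + 1) + p * (2 * n * f0 + n * p) := by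
          ring
        rw [e]
        exact dvd_add hf0 (Dvd.intro _ rfl)
      · exact ⟨f0, ho, hf0⟩
    obtain ⟨m, hm⟩ := hFdvd
    have heven : (2 : ℤ) ∣ (n * F ^ 2 + 1) := by
      have hoddprod : Odd ((n : ℤ) * F ^ 2) := hnoddZ.mul (hFodd.pow)
      obtain ⟨w, hw⟩ := hoddprod
      exact ⟨w + 1, by omega⟩
    have hmeven : Even m := by
      rcases Int.even_or_odd m with he | ho
      · exact he
      · exfalso
        have : Odd ((p : ℤ) * m) := hpoddZ.mul ho
        obtain ⟨w1, hw1⟩ := this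
        obtain ⟨w2, hw2⟩ := heven
        omega
    obtain ⟨c0, hc0⟩ := hmeven
    refine assemble n h1 (2 * (p : ℤ)) 2 F (2 * (b0 : ℤ)) c0
      (by have := hp.pos; positivity) ?_ ?_
    · have : ((p + 2 : ℕ) : ℤ) = ((n * b0 : ℕ) : ℤ) := congrArg Nat.cast hb0
      push_cast at this
      linarith
    · rw [hc0] at hm
      linarith [hm]


/-- Legendre's three-square theorem, odd case. -/
lemma three_squares (m : ℕ) (hodd : m % 2 = 1) (h8 : m % 8 ≠ 7) :
    ∃ x y z : ℤ, x ^ 2 + y ^ 2 + z ^ 2 = m :=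
  three_squares_core m (by omega) hodd h8


theorem twice_odd_T_in_spectrum (n T : ℤ) (hT : ∃ t : ℤ, Odd t ∧ T = 2 * t)
    (hn : 0 < n) (hle : T^2 ≤ 4 * n) (hpar : Even n) :
    (∃ a b c d : ℤ, a^2 + b^2 + c^2 + d^2 = n ∧ a + b + c + d = T) ↔
      ¬ ((8 : ℤ) ∣ n) := by
  obtain ⟨t, ht, rfl⟩ := hT
  obtain ⟨k, hk⟩ := ht
  constructor
  · rintro ⟨a, b, c, d, h1, h2⟩ h8
    obtain ⟨m, hm⟩ := h8
    have key : ∀ A B C D : ZMod 8, A * A + B * B + C * C + D * D = 0 →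
        A + B + C + D ≠ 2 ∧ A + B + C + D ≠ 6 := by decide
    have keyk : ∀ K : ZMod 8, 2 * (2 * K + 1) = 2 ∨ 2 * (2 * K + 1) = 6 := by decide
    have e1 : ((a : ZMod 8)) * a + (b : ZMod 8) * b + (c : ZMod 8) * c + (d : ZMod 8) * d = 0 := by
      have h1' : a * a + b * b + c * c + d * d = 8 * m := by rw [hm] at h1; nlinarith [h1]
      have := congrArg (fun z : ℤ => (z : ZMod 8)) h1'
      push_cast at this
      rw [this, show ((8 : ZMod 8)) = 0 from by decide]
      ring
    have e2 : ((a : ZMod 8)) + (b : ZMod 8) + (c : ZMod 8) + (d : ZMod 8)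
        = 2 * (2 * (k : ZMod 8) + 1) := by
      have h2' : a + b + c + d = 2 * (2 * k + 1) := by rw [h2, hk]
      have := congrArg (fun z : ℤ => (z : ZMod 8)) h2'
      push_cast at this
      simpa using this
    rcases keyk (k : ZMod 8) with hk8 | hk8 <;> rw [hk8] at e2
    · exact (key _ _ _ _ e1).1 e2
    · exact (key _ _ _ _ e1).2 e2
  · intro h8
    -- m' = n - t^2 is odd, nonneg, ≢ 7 mod 8
    have ht2 : t ^ 2 ≤ n := by nlinarith
    have hodd_t : Odd t := ⟨k, hk⟩
    have hm'odd : Odd (n - t ^ 2) := by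
      rcases hpar with ⟨u, hu⟩
      refine ⟨u - 2 * k ^ 2 - 2 * k - 1, ?_⟩
      rw [hu, hk]; ring
    have hm'pos : 0 < n - t ^ 2 := by
      rcases hm'odd with ⟨u, hu⟩
      omega
    set m : ℕ := (n - t ^ 2).toNat with hmdef
    have hmcast : (m : ℤ) = n - t ^ 2 := Int.toNat_of_nonneg (by omega)
    have hmodd : m % 2 = 1 := by
      rcases hm'odd with ⟨u, hu⟩
      omega
    have hm8 : m % 8 ≠ 7 := by
      intro hc
      apply h8
      have h1 : (8 : ℤ) ∣ (t ^ 2 - 1) := by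
        obtain ⟨u, hu⟩ := Int.even_mul_succ_self k
        exact ⟨u, by rw [hk]; linear_combination 4 * hu⟩
      have h2 : (8 : ℤ) ∣ (m : ℤ) - 7 := by
        have := Nat.div_add_mod m 8
        rw [hc] at this
        refine ⟨(m / 8 : ℕ), ?_⟩
        push_cast
        omega
      omega
    obtain ⟨x, y, z, hxyz⟩ := three_squares m hmodd hm8
    have hxyz' : x ^ 2 + y ^ 2 + z ^ 2 = n - t ^ 2 := by rw [hxyz, hmcast]
    have sq2 : ∀ w : ℤ, w ^ 2 % 2 = w % 2 := by
      intro w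
      obtain ⟨u, hu⟩ := Int.even_mul_pred_self w
      have h' : w ^ 2 = w + 2 * u := by linear_combination hu
      omega
    have hpar2 : (2 : ℤ) ∣ (t + x + y + z) := by
      have ex := sq2 x
      have ey := sq2 y
      have ez := sq2 z
      have hm2 : (n - t ^ 2) % 2 = 1 := Int.odd_iff.mp hm'odd
      have ht2' : t % 2 = 1 := Int.odd_iff.mp hodd_t
      obtain ⟨X, hX⟩ : ∃ X, x ^ 2 = X := ⟨_, rfl⟩
      obtain ⟨Y, hY⟩ : ∃ Y, y ^ 2 = Y := ⟨_, rfl⟩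
      obtain ⟨Z, hZ⟩ : ∃ Z, z ^ 2 = Z := ⟨_, rfl⟩
      obtain ⟨W, hW⟩ : ∃ W, n - t ^ 2 = W := ⟨_, rfl⟩
      rw [hX] at ex
      rw [hY] at ey
      rw [hZ] at ez
      rw [hX, hY, hZ, hW] at hxyz'
      rw [hW] at hm2
      omega
    obtain ⟨a, ha⟩ := hpar2
    obtain ⟨b, hb⟩ : (2 : ℤ) ∣ (t + x - y - z) := ⟨a - y - z, by omega⟩
    obtain ⟨c, hc⟩ : (2 : ℤ) ∣ (t - x + y - z) := ⟨a - x - z, by omega⟩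
    obtain ⟨d, hd⟩ : (2 : ℤ) ∣ (t - x - y + z) := ⟨a - x - y, by omega⟩
    refine ⟨a, b, c, d, ?_, by omega⟩
    have key : 4 * (a ^ 2 + b ^ 2 + c ^ 2 + d ^ 2) = 4 * n := by
      linear_combination (-(t + x + y + z) - 2 * a) * ha + (-(t + x - y - z) - 2 * b) * hb +
        (-(t - x + y - z) - 2 * c) * hc + (-(t - x - y + z) - 2 * d) * hd + 4 * hxyz'
    linarith
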